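/- Let (x_i)_{i≥0} and (y_i)_{i≥1} be sequences of positive reals with y_i < 1 for each i. Define z_0 = x_0 and z_i = x_i + (1 − y_i)·z_{i−1} for i > 0. If ∑_i x_i < ∞ and ∑_i y_i = ∞, then z_i → 0 as i → ∞. -/

import Mathlib

open Filter

/-- If `(x_i)` and `(y_i)` are sequences of positive reals with `y_i < 1`,
`z_0 = x_0`, `z_i = x_i + (1 − y_i) z_{i−1}`, `∑ x_i < ∞` and `∑ y_i = ∞`, then `z_i → 0`. -/
theorem stmt1 (x y z : ℕ → ℝ)
    (hx : ∀ i, 0 < x i) (hy : ∀ i, 1 ≤ i → 0 < y i) (hy1 : ∀ i, 1 ≤ i → y i < 1)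
    (hz0 : z 0 = x 0) (hzrec : ∀ i, 0 < i → z i = x i + (1 - y i) * z (i - 1))
    (hxsum : Summable x)
    (hysum : Tendsto (fun n => ∑ i ∈ Finset.range n, y i) atTop atTop) :
    Tendsto z atTop (nhds 0) := by
  -- positivity of z
  have hzpos : ∀ i, 0 < z i := by
    intro i
    induction i with
    | zero => rw [hz0]; exact hx 0
    | succ n ih =>
      rw [hzrec (n + 1) (Nat.succ_pos n)]
      simp only [Nat.add_sub_cancel]
      have h1 : 0 < 1 - y (n + 1) := by linarith [hy1 (n + 1) (Nat.le_add_left 1 n)]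
      nlinarith [hx (n+1), mul_pos h1 ih]
  -- key recursive bound
  have key : ∀ N n, N ≤ n → z n ≤ (∑ j ∈ Finset.Ioc N n, x j)
      + (∏ k ∈ Finset.Ioc N n, (1 - y k)) * z N := by
    intro N n hNn
    induction n, hNn using Nat.le_induction with
    | base => simp
    | succ n hn ih =>
      have h0 : 0 < 1 - y (n + 1) := by linarith [hy1 (n + 1) (Nat.le_add_left 1 n)]
      have h1 : 1 - y (n + 1) ≤ 1 := by linarith [hy (n + 1) (Nat.le_add_left 1 n)]
      have hrec : z (n + 1) = x (n + 1) + (1 - y (n + 1)) * z n := by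
        have := hzrec (n + 1) (Nat.succ_pos n); simpa using this
      rw [hrec, Finset.sum_Ioc_succ_top hn, Finset.prod_Ioc_succ_top hn]
      have hmul : (1 - y (n + 1)) * z n ≤ (1 - y (n + 1)) *
          ((∑ j ∈ Finset.Ioc N n, x j) + (∏ k ∈ Finset.Ioc N n, (1 - y k)) * z N) :=
        mul_le_mul_of_nonneg_left ih (le_of_lt h0)
      have hsum_nonneg : 0 ≤ ∑ j ∈ Finset.Ioc N n, x j :=
        Finset.sum_nonneg fun j _ => (hx j).le
      nlinarith [hmul, hsum_nonneg, h0, h1]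
  -- reduce to ε-criterion
  rw [Metric.tendsto_atTop]
  intro ε hε
  -- choose N so that the tail sum is small
  have htail : Tendsto (fun m => ∑' k, x (k + m)) atTop (nhds 0) := tendsto_sum_nat_add x
  obtain ⟨N, hN⟩ := (Metric.tendsto_atTop.1 htail (ε / 4) (by linarith)).imp
    (fun N h => h)
  have hNtail : ∑' k, x (k + (N + 1)) < ε / 4 := by
    have := hN (N + 1) (Nat.le_succ N)
    rw [Real.dist_eq, sub_zero] at this
    calc ∑' k, x (k + (N + 1)) ≤ |∑' k, x (k + (N + 1))| := le_abs_self _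
      _ < ε / 4 := this
  -- tail sums over Ioc N n are < ε/4
  have hsum_small : ∀ n, (∑ j ∈ Finset.Ioc N n, x j) < ε / 4 := by
    intro n
    have hsummable : Summable fun k => x (k + (N + 1)) :=
      (summable_nat_add_iff (N + 1)).2 hxsum
    have hle : (∑ j ∈ Finset.Ioc N n, x j) ≤ ∑' k, x (k + (N + 1)) := by
      have heq : (∑ j ∈ Finset.Ioc N n, x j)
          = ∑ k ∈ Finset.range (n - N), x (k + (N + 1)) := by
        rw [← Finset.Ico_add_one_add_one_eq_Ioc, Finset.sum_Ico_eq_sum_range]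
        have hnn : n + 1 - (N + 1) = n - N := by omega
        rw [hnn]
        exact Finset.sum_congr rfl fun k _ => by rw [Nat.add_comm]
      rw [heq]
      exact Summable.sum_le_tsum _ (fun k _ => (hx _).le) hsummable
    linarith
  -- the product tends to 0
  have hprod : Tendsto (fun n => (∏ k ∈ Finset.Ioc N n, (1 - y k)) * z N) atTop (nhds 0) := by
    have hupper : ∀ n, (∏ k ∈ Finset.Ioc N n, (1 - y k))
        ≤ Real.exp (-(∑ k ∈ Finset.Ioc N n, y k)) := by
      intro n
      have h1 : ∀ k ∈ Finset.Ioc N n, (1 - y k) ≤ Real.exp (-(y k)) := by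
        intro k hk
        have := Real.add_one_le_exp (-(y k))
        linarith
      calc (∏ k ∈ Finset.Ioc N n, (1 - y k))
          ≤ ∏ k ∈ Finset.Ioc N n, Real.exp (-(y k)) := by
            apply Finset.prod_le_prod
            · intro k hk
              have hk1 : 1 ≤ k := by have := (Finset.mem_Ioc.1 hk).1; omega
              linarith [hy1 k hk1]
            · exact h1
        _ = Real.exp (-(∑ k ∈ Finset.Ioc N n, y k)) := by
            rw [← Real.exp_sum]; congr 1; rw [← Finset.sum_neg_distrib]
    have hlower : ∀ n, 0 ≤ ∏ k ∈ Finset.Ioc N n, (1 - y k) := by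
      intro n
      apply Finset.prod_nonneg
      intro k hk
      have hk1 : 1 ≤ k := by have := (Finset.mem_Ioc.1 hk).1; omega
      linarith [hy1 k hk1]
    have hsumIoc : Tendsto (fun n => ∑ k ∈ Finset.Ioc N n, y k) atTop atTop := by
      have hEq : ∀ n, N ≤ n → (∑ k ∈ Finset.Ioc N n, y k)
          = (∑ i ∈ Finset.range (n + 1), y i) - (∑ i ∈ Finset.range (N + 1), y i) := by
        intro n hn
        have : (∑ i ∈ Finset.range (N + 1), y i) + (∑ k ∈ Finset.Ioc N n, y k)
            = ∑ i ∈ Finset.range (n + 1), y i := by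
          rw [Finset.range_eq_Ico, Finset.range_eq_Ico, ← Finset.Ico_add_one_add_one_eq_Ioc]
          exact Finset.sum_Ico_consecutive y (m := 0) (n := N + 1) (k := n + 1) (by omega) (by omega)
        linarith
      have h2 : Tendsto (fun n => (∑ i ∈ Finset.range (n + 1), y i)
          - (∑ i ∈ Finset.range (N + 1), y i)) atTop atTop :=
        (hysum.comp (tendsto_add_atTop_nat 1)).atTop_add tendsto_const_nhds
      refine h2.congr' ?_
      filter_upwards [eventually_ge_atTop N] with n hn
      exact (hEq n hn).symm
    have hexp : Tendsto (fun n => Real.exp (-(∑ k ∈ Finset.Ioc N n, y k))) atTop (nhds 0) :=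
      Real.tendsto_exp_neg_atTop_nhds_zero.comp hsumIoc
    have hP : Tendsto (fun n => ∏ k ∈ Finset.Ioc N n, (1 - y k)) atTop (nhds 0) :=
      tendsto_of_tendsto_of_tendsto_of_le_of_le tendsto_const_nhds hexp hlower hupper
    simpa using hP.mul_const (z N)
  -- conclude
  obtain ⟨M, hM⟩ := (Metric.tendsto_atTop.1 hprod (ε / 4) (by linarith))
  refine ⟨max N M, fun n hn => ?_⟩
  have hnN : N ≤ n := le_trans (le_max_left _ _) hn
  have hnM : M ≤ n := le_trans (le_max_right _ _) hn
  have hb := key N n hnN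
  have hprodsmall : (∏ k ∈ Finset.Ioc N n, (1 - y k)) * z N < ε / 4 := by
    have := hM n hnM
    rw [Real.dist_eq, sub_zero] at this
    calc (∏ k ∈ Finset.Ioc N n, (1 - y k)) * z N
        ≤ |(∏ k ∈ Finset.Ioc N n, (1 - y k)) * z N| := le_abs_self _
      _ < ε / 4 := this
  rw [Real.dist_eq, sub_zero, abs_of_pos (hzpos n)]
  linarith [hsum_small n, hb]
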